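/- The quotient algebra MvPolynomial (Fin n) (ZMod 2) ⧸ I₁(L) is isomorphic, as a (ZMod 2)-algebra, to the group algebra AddMonoidAlgebra (ZMod 2) (G ⧸ L) of the quotient group G/L, where I₁(L) is the ideal generated by {X^{lift(c)} − 1 : c ∈ L} ∪ {X_i^{g i} − 1 : i ∈ Fin n}. -/

import Mathlib

open MvPolynomial

/-- The ideal `I₁(L)` generated by `{X^(lift c) - 1 : c ∈ L} ∪ {X i ^ g i - 1 : i}`
in `MvPolynomial (Fin n) (ZMod 2)`. -/
noncomputable def latticeIdeal (n : ℕ) (g : Fin n → ℕ)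
    (L : AddSubgroup (∀ i, ZMod (g i))) : Ideal (MvPolynomial (Fin n) (ZMod 2)) :=
  Ideal.span
    ({ p : MvPolynomial (Fin n) (ZMod 2) |
        ∃ c ∈ L, p = monomial
          (Finsupp.equivFunOnFinite.symm fun i => (c i).val) (1 : ZMod 2) - 1 } ∪
     { p : MvPolynomial (Fin n) (ZMod 2) |
        ∃ i : Fin n, p = X i ^ g i - 1 })

private lemma pow_mod_aux {M : Type*} [Monoid M] {y : M} {m : ℕ} (h : y ^ m = 1) (a : ℕ) :
    y ^ a = y ^ (a % m) := by
  conv_lhs => rw [← Nat.div_add_mod a m, pow_add, pow_mul, h, one_pow, one_mul]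

private lemma nsmul_single_aux {n : ℕ} {g : Fin n → ℕ} (i : Fin n) (k : ℕ)
    (x : ZMod (g i)) :
    k • (Pi.single i x : ∀ j, ZMod (g j)) = Pi.single i (k • x) := by
  funext j
  by_cases hj : j = i
  · subst hj; simp
  · simp [Pi.single_eq_of_ne hj]

private lemma sum_smul_single_aux {n : ℕ} {g : Fin n → ℕ} (hg : ∀ i, 1 ≤ g i)
    (c : ∀ i, ZMod (g i)) :
    (∑ i, (c i).val • (Pi.single i (1 : ZMod (g i)) : ∀ j, ZMod (g j))) = c := by
  haveI : ∀ i, NeZero (g i) := fun i => ⟨by have := hg i; omega⟩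
  have h : ∀ i, (c i).val • (Pi.single i (1 : ZMod (g i)) : ∀ j, ZMod (g j)) =
      Pi.single i (c i) := by
    intro i
    have h1 : (c i).val • (1 : ZMod (g i)) = c i := by
      rw [nsmul_eq_mul, mul_one, ZMod.natCast_val, ZMod.cast_id]
    rw [nsmul_single_aux, h1]
  simp_rw [h]
  exact Finset.univ_sum_single c

private lemma monomial_eq_prod_aux {n : ℕ} (u : Fin n → ℕ) :
    (monomial (Finsupp.equivFunOnFinite.symm u) (1 : ZMod 2)) = ∏ i, X i ^ u i := by
  rw [monomial_eq, C_1, one_mul, Finsupp.prod_fintype _ _ fun i => pow_zero _]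
  rfl

/-- The quotient algebra `MvPolynomial (Fin n) (ZMod 2) ⧸ I₁(L)`
is isomorphic, as a `ZMod 2`-algebra, to the group algebra of `G ⧸ L`. -/
theorem stmt_9 (n : ℕ) (g : Fin n → ℕ) (hg : ∀ i, 1 ≤ g i)
    (L : AddSubgroup (∀ i, ZMod (g i))) :
    Nonempty ((MvPolynomial (Fin n) (ZMod 2) ⧸ latticeIdeal n g L) ≃ₐ[ZMod 2]
      AddMonoidAlgebra (ZMod 2) ((∀ i, ZMod (g i)) ⧸ L)) := by
  haveI : ∀ i, NeZero (g i) := fun i => ⟨by have := hg i; omega⟩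
  set I := latticeIdeal n g L with hI
  -- basic facts in the quotient
  have hx : ∀ i, (Ideal.Quotient.mk I (X i)) ^ g i = 1 := by
    intro i
    rw [← map_pow, ← map_one (Ideal.Quotient.mk I), Ideal.Quotient.mk_eq_mk_iff_sub_mem]
    exact Ideal.subset_span (Or.inr ⟨i, rfl⟩)
  set fG : (∀ i, ZMod (g i)) → (MvPolynomial (Fin n) (ZMod 2) ⧸ I) :=
    fun c => ∏ i, (Ideal.Quotient.mk I (X i)) ^ (c i).val with hfG
  have hadd : ∀ c c', fG (c + c') = fG c * fG c' := by
    intro c c'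
    rw [hfG, ← Finset.prod_mul_distrib]
    refine Finset.prod_congr rfl fun i _ => ?_
    rw [← pow_add, Pi.add_apply, ZMod.val_add, ← pow_mod_aux (hx i)]
  have hmk_mono : ∀ u : Fin n → ℕ,
      Ideal.Quotient.mk I (monomial (Finsupp.equivFunOnFinite.symm u) (1 : ZMod 2)) =
        ∏ i, (Ideal.Quotient.mk I (X i)) ^ u i := by
    intro u
    rw [monomial_eq_prod_aux, map_prod]
    simp [map_pow]
  have hL : ∀ c ∈ L, fG c = 1 := by
    intro c hc
    have h1 : Ideal.Quotient.mk I
        (monomial (Finsupp.equivFunOnFinite.symm fun i => (c i).val) (1 : ZMod 2)) = 1 := by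
      rw [← map_one (Ideal.Quotient.mk I), Ideal.Quotient.mk_eq_mk_iff_sub_mem]
      exact Ideal.subset_span (Or.inl ⟨c, hc, rfl⟩)
    exact (hmk_mono fun i => (c i).val).symm.trans h1
  -- the backward monoid hom
  set bwdMul : Multiplicative ((∀ i, ZMod (g i)) ⧸ L) →*
      (MvPolynomial (Fin n) (ZMod 2) ⧸ I) :=
    { toFun := fun q => Quotient.liftOn' (Multiplicative.toAdd q) fG (by
        intro a b hab
        have h : -a + b ∈ L := QuotientAddGroup.leftRel_apply.mp hab
        have h2 := hadd a (-a + b)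
        rw [add_neg_cancel_left, hL _ h, mul_one] at h2
        exact h2.symm)
      map_one' := hL 0 L.zero_mem
      map_mul' := fun x y => Quotient.inductionOn₂' x y hadd } with hbwdMul
  set bwd : AddMonoidAlgebra (ZMod 2) ((∀ i, ZMod (g i)) ⧸ L) →ₐ[ZMod 2]
      (MvPolynomial (Fin n) (ZMod 2) ⧸ I) :=
    AddMonoidAlgebra.lift (ZMod 2) _ _ bwdMul with hbwd
  have hbwd_single : ∀ c : ∀ i, ZMod (g i),
      bwd (AddMonoidAlgebra.single (QuotientAddGroup.mk c) 1) = fG c := by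
    intro c
    rw [hbwd, AddMonoidAlgebra.lift_single, one_smul]
    rfl
  -- the forward alg hom
  set fwd0 : MvPolynomial (Fin n) (ZMod 2) →ₐ[ZMod 2]
      AddMonoidAlgebra (ZMod 2) ((∀ i, ZMod (g i)) ⧸ L) :=
    aeval (fun i => AddMonoidAlgebra.single
      (QuotientAddGroup.mk (Pi.single i (1 : ZMod (g i)))) 1) with hfwd0
  have hfwd0_X : ∀ i, fwd0 (X i) =
      AddMonoidAlgebra.single (QuotientAddGroup.mk (Pi.single i (1 : ZMod (g i)))) 1 := by
    intro i; rw [hfwd0, aeval_X]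
  have hfwd0_prod : ∀ u : Fin n → ℕ,
      fwd0 (∏ i, X i ^ u i) =
        AddMonoidAlgebra.single
          (QuotientAddGroup.mk (∑ i, u i • Pi.single i (1 : ZMod (g i)))) 1 := by
    intro u
    rw [map_prod]
    have h : ∀ i, fwd0 (X i ^ u i) =
        AddMonoidAlgebra.single
          (u i • (QuotientAddGroup.mk (Pi.single i (1 : ZMod (g i))) :
            (∀ i, ZMod (g i)) ⧸ L)) 1 := by
      intro i
      rw [map_pow, hfwd0_X, AddMonoidAlgebra.single_pow, one_pow]
    simp_rw [h]
    rw [AddMonoidAlgebra.prod_single, Finset.prod_const_one]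
    congr 1
    rw [QuotientAddGroup.mk_sum]
    simp_rw [QuotientAddGroup.mk_nsmul]
  have hker : ∀ a ∈ I, fwd0 a = 0 := by
    intro a ha
    have hle : I ≤ RingHom.ker fwd0.toRingHom := by
      rw [hI, latticeIdeal, Ideal.span_le]
      rintro p (⟨c, hc, rfl⟩ | ⟨i, rfl⟩) <;>
        simp only [SetLike.mem_coe, RingHom.mem_ker, AlgHom.toRingHom_eq_coe,
          RingHom.coe_coe, map_sub, map_one, map_pow]
      · rw [monomial_eq_prod_aux, hfwd0_prod, sum_smul_single_aux hg,
          (QuotientAddGroup.eq_zero_iff c).mpr hc, ← AddMonoidAlgebra.one_def, sub_self]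
      · rw [hfwd0_X, AddMonoidAlgebra.single_pow, one_pow]
        have : g i • (Pi.single i (1 : ZMod (g i)) : ∀ j, ZMod (g j)) = 0 := by
          have h2 : g i • (1 : ZMod (g i)) = 0 := by
            rw [nsmul_eq_mul, mul_one, ZMod.natCast_self]
          rw [nsmul_single_aux, h2, Pi.single_zero]
        rw [show ((g i • (QuotientAddGroup.mk (Pi.single i (1 : ZMod (g i)))) :
          (∀ i, ZMod (g i)) ⧸ L)) = 0 by
            rw [← QuotientAddGroup.mk_nsmul, this, QuotientAddGroup.mk_zero]]
        rw [← AddMonoidAlgebra.one_def, sub_self]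
    exact hle ha
  set fwd := Ideal.Quotient.liftₐ I fwd0 hker with hfwd
  have hfwd_mk : ∀ p, fwd (Ideal.Quotient.mk I p) = fwd0 p := fun p =>
    Ideal.Quotient.liftₐ_apply _ _ _ _
  refine ⟨AlgEquiv.ofAlgHom fwd bwd ?_ ?_⟩
  · -- fwd ∘ bwd = id
    apply AddMonoidAlgebra.algHom_ext
    intro q
    induction q using QuotientAddGroup.induction_on with
    | H c =>
      rw [AlgHom.coe_comp, Function.comp_apply, hbwd_single, AlgHom.coe_id, id_eq, hfG]
      rw [map_prod]
      have h : ∀ i, fwd ((Ideal.Quotient.mk I (X i)) ^ (c i).val) =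
          AddMonoidAlgebra.single
            ((c i).val • (QuotientAddGroup.mk (Pi.single i (1 : ZMod (g i))) :
              (∀ i, ZMod (g i)) ⧸ L)) 1 := by
        intro i
        rw [map_pow, hfwd_mk, hfwd0_X, AddMonoidAlgebra.single_pow, one_pow]
      simp_rw [h]
      rw [AddMonoidAlgebra.prod_single, Finset.prod_const_one]
      congr 1
      simp_rw [← QuotientAddGroup.mk_nsmul]
      rw [← QuotientAddGroup.mk_sum, sum_smul_single_aux hg]
    exact Subsingleton.elim _ _
  · -- bwd ∘ fwd = id
    apply Ideal.Quotient.algHom_ext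
    apply MvPolynomial.algHom_ext
    intro i
    simp only [AlgHom.comp_apply, AlgHom.coe_id, id_eq, Ideal.Quotient.mkₐ_eq_mk]
    rw [hfwd_mk, hfwd0_X, hbwd_single]
    show (∏ j, (Ideal.Quotient.mk I) (X j) ^
        ((Pi.single i (1 : ZMod (g i)) : ∀ j, ZMod (g j)) j).val) =
      Ideal.Quotient.mk I (X i)
    rw [Finset.prod_eq_single i ?h1 ?h2]
    · rw [Pi.single_eq_same, ZMod.val_one_eq_one_mod, ← pow_mod_aux (hx i) 1, pow_one]
    · intro j _ hj
      rw [Pi.single_eq_of_ne hj, ZMod.val_zero, pow_zero]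
    · intro h; exact absurd (Finset.mem_univ i) h
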